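/- Let L' be a ladder graph obtained from a ladder L by appending one vertex v adjacent to exactly two vertices of L (one endpoint of each of the two rails, which are themselves adjacent in L). Then 2·τ(L) ≤ τ(L') ≤ 3·τ(L), where τ denotes the number of spanning trees. -/

import Mathlib

open SimpleGraph

/-- The triangular-lattice ladder on `n` vertices: listing the vertices of the two
parallel rails in zigzag order `0, 1, …, n-1`, two vertices are adjacent exactly when
they are at distance 1 or 2 in this order (vertices at distance 2 are consecutive on
the same rail, vertices at distance 1 are on opposite rails). -/
def ladder (n : ℕ) : SimpleGraph (Fin n) :=
  SimpleGraph.fromRel (fun i j => (j : ℕ) = (i : ℕ) + 1 ∨ (j : ℕ) = (i : ℕ) + 2)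

/-- The number of spanning trees of `G`. -/
noncomputable def numSpanningTrees {V : Type*} [Fintype V] (G : SimpleGraph V) : ℕ :=
  Set.ncard {T : SimpleGraph V | T ≤ G ∧ T.IsTree}

namespace LadderAux

open SimpleGraph Walk

variable {n : ℕ}

lemma cs_ne_last (i : Fin n) : i.castSucc ≠ Fin.last n := (Fin.castSucc_lt_last i).ne

lemma reach_aux {T : SimpleGraph (Fin (n+1))} {S : SimpleGraph (Fin n)}
    (hc : ∀ i j : Fin n, T.Adj i.castSucc j.castSucc → S.Adj i j)
    (hH : ∀ w1 w2 : Fin n, T.Adj w1.castSucc (Fin.last n) → T.Adj (Fin.last n) w2.castSucc →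
      S.Reachable w1 w2) :
    ∀ (k : ℕ) {a b : Fin (n+1)} (p : T.Walk a b), p.length ≤ k →
      ∀ x y : Fin n, a = x.castSucc → b = y.castSucc → S.Reachable x y := by
  intro k
  induction k with
  | zero =>
    intro a b p hp x y hx hy
    cases p with
    | nil =>
      obtain rfl : x = y := Fin.castSucc_injective n (hx.symm.trans hy)
      exact Reachable.refl x
    | cons h q => simp [Walk.length_cons] at hp
  | succ k ih =>
    intro a b p hp x y hx hy
    cases p with
    | nil =>
      obtain rfl : x = y := Fin.castSucc_injective n (hx.symm.trans hy)
      exact Reachable.refl x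
    | cons h q =>
      rename_i w
      rw [hx] at h
      by_cases hw : w = Fin.last n
      · subst hw
        have hqn : ¬ q.Nil := Walk.not_nil_of_ne (by rw [hy]; exact (cs_ne_last y).symm)
        obtain ⟨w2, h2, q2, rfl⟩ := Walk.not_nil_iff.mp hqn
        have hw2 : w2 ≠ Fin.last n := h2.ne'
        obtain ⟨w2', rfl⟩ := Fin.exists_castSucc_eq.mpr hw2
        have hlen : q2.length ≤ k := by simp [Walk.length_cons] at hp; omega
        exact (hH x w2' h h2).trans (ih q2 hlen w2' y rfl hy)
      · obtain ⟨w', rfl⟩ := Fin.exists_castSucc_eq.mpr hw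
        have hlen : q.length ≤ k := by simp [Walk.length_cons] at hp; omega
        exact ((hc x w' h).reachable).trans (ih q hlen w' y rfl hy)

lemma connected_of {T : SimpleGraph (Fin (n+1))} {S : SimpleGraph (Fin n)}
    (hT : T.Connected)
    (hc : ∀ i j : Fin n, T.Adj i.castSucc j.castSucc → S.Adj i j)
    (hH : ∀ w1 w2 : Fin n, T.Adj w1.castSucc (Fin.last n) → T.Adj (Fin.last n) w2.castSucc →
      S.Reachable w1 w2) (hn : 0 < n) : S.Connected := by
  rw [connected_iff]
  refine ⟨fun x y => ?_, ⟨⟨0, hn⟩⟩⟩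
  obtain ⟨p⟩ := hT.preconnected x.castSucc y.castSucc
  exact reach_aux hc hH p.length p le_rfl x y rfl rfl

lemma map_walk_pullback {V W : Type*} {f : V ↪ W} {G : SimpleGraph V}
    {a b : W} (p : (G.map f).Walk a b) :
    ∀ {x y : V} (ha : f x = a) (hb : f y = b),
      ∃ q : G.Walk x y, p = (q.map (SimpleGraph.Embedding.map f G).toHom).copy ha hb := by
  induction p with
  | nil =>
    intro x y ha hb
    obtain rfl : x = y := f.injective (ha.trans hb.symm)
    subst ha
    exact ⟨Walk.nil, rfl⟩
  | cons h p ihp =>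
    intro x y ha hb
    obtain ⟨u, v, huv, hu, hv⟩ := (SimpleGraph.map_adj f G _ _).mp h
    obtain rfl : u = x := f.injective (hu.trans ha.symm)
    obtain ⟨q, hq⟩ := ihp hv hb
    refine ⟨Walk.cons huv q, ?_⟩
    subst hq
    subst ha
    subst hv
    subst hb
    rfl

lemma isAcyclic_map {V W : Type*} {f : V ↪ W} {G : SimpleGraph V} (hG : G.IsAcyclic) :
    (G.map f).IsAcyclic := by
  intro a c hc
  obtain ⟨w, had, q, -⟩ := Walk.not_nil_iff.mp hc.not_nil
  obtain ⟨u, v, -, hu, -⟩ := (SimpleGraph.map_adj f G _ _).mp had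
  obtain ⟨qq, hqq⟩ := map_walk_pullback c hu hu
  rw [hqq] at hc; replace hc := (Walk.isCycle_copy (qq.map (SimpleGraph.Embedding.map f G).toHom) hu).mp hc
  have hinj : Function.Injective (SimpleGraph.Embedding.map f G).toHom :=
    fun i j hij => f.injective hij
  exact hG qq ((Walk.map_isCycle_iff_of_injective hinj).mp hc)

lemma no_cycle_through {V : Type*} [DecidableEq V] {T : SimpleGraph V} {z u0 : V}
    (hu : ∀ w, T.Adj z w → w = u0) {a : V} {c : T.Walk a a} (hc : c.IsCycle)
    (hz : z ∈ c.support) : False := by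
  have hc' : (c.rotate z hz).IsCycle := hc.rotate hz
  obtain ⟨w, had, q, he⟩ := Walk.not_nil_iff.mp hc'.not_nil
  rw [he, Walk.cons_isCycle_iff] at hc'
  have hqn : ¬ q.reverse.Nil := Walk.not_nil_of_ne had.ne
  obtain ⟨y, had2, q2, he2⟩ := Walk.not_nil_iff.mp hqn
  have hmem : s(z, y) ∈ q.reverse.edges := by
    rw [he2, Walk.edges_cons]; exact List.mem_cons_self
  rw [hu y had2, ← hu w had, Walk.edges_reverse, List.mem_reverse] at hmem
  exact hc'.2 hmem


lemma cs_ne_last' (i : Fin n) : i.castSucc ≠ Fin.last n := (Fin.castSucc_lt_last i).ne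

/-- restriction to first n vertices -/
def res (T : SimpleGraph (Fin (n+1))) : SimpleGraph (Fin n) := T.comap Fin.castSucc

/-- extension by a pendant vertex attached at `u` -/
def ext1 (S : SimpleGraph (Fin n)) (u : Fin n) : SimpleGraph (Fin (n+1)) :=
  S.map Fin.castSuccEmb ⊔ edge (Fin.last n) u.castSucc

lemma castSuccEmb_apply (i : Fin n) : Fin.castSuccEmb i = i.castSucc := rfl

@[simp] lemma res_adj {T : SimpleGraph (Fin (n+1))} {i j : Fin n} :
    (res T).Adj i j ↔ T.Adj i.castSucc j.castSucc := Iff.rfl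

lemma ext1_adj_last {S : SimpleGraph (Fin n)} {u : Fin n} {w : Fin (n+1)}
    (h : (ext1 S u).Adj (Fin.last n) w) : w = u.castSucc := by
  rcases h with h | h
  · obtain ⟨i, j, -, hi, -⟩ := (SimpleGraph.map_adj _ _ _ _).mp h
    exact absurd hi (cs_ne_last' i)
  · rw [edge_adj] at h
    rcases h.1 with ⟨-, h2⟩ | ⟨h1, -⟩
    · exact h2
    · exact absurd h1.symm (cs_ne_last' u)

lemma ext1_adj_last' {S : SimpleGraph (Fin n)} (u : Fin n) :
    (ext1 S u).Adj (Fin.last n) u.castSucc := by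
  refine Or.inr ?_
  rw [edge_adj]
  exact ⟨Or.inl ⟨rfl, rfl⟩, (cs_ne_last' u).symm⟩

lemma res_ext1 (S : SimpleGraph (Fin n)) (u : Fin n) : res (ext1 S u) = S := by
  ext i j
  constructor
  · rintro (h | h)
    · obtain ⟨i', j', hadj, hi, hj⟩ := (SimpleGraph.map_adj _ _ _ _).mp h
      rw [castSuccEmb_apply] at hi hj
      obtain rfl : i' = i := Fin.castSucc_injective n hi
      obtain rfl : j' = j := Fin.castSucc_injective n hj
      exact hadj
    · rw [edge_adj] at h
      rcases h.1 with ⟨h1, -⟩ | ⟨-, h2⟩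
      · exact absurd h1 (cs_ne_last' i)
      · exact absurd h2 (cs_ne_last' j)
  · intro h
    exact Or.inl ((SimpleGraph.map_adj _ _ _ _).mpr ⟨i, j, h, rfl, rfl⟩)

lemma ext1_isTree {S : SimpleGraph (Fin n)} {u : Fin n} (hS : S.IsTree) : (ext1 S u).IsTree := by
  constructor
  · rw [connected_iff]
    refine ⟨?_, ⟨Fin.last n⟩⟩
    have key : ∀ a, (ext1 S u).Reachable a u.castSucc := by
      intro a
      by_cases ha : a = Fin.last n
      · subst ha
        exact (ext1_adj_last' u).reachable
      · obtain ⟨a', rfl⟩ := Fin.exists_castSucc_eq.mpr ha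
        have hr : S.Reachable a' u := hS.isConnected.preconnected a' u
        exact Reachable.mono le_sup_left
          (hr.map (SimpleGraph.Embedding.map Fin.castSuccEmb S).toHom)
    intro a b
    exact (key a).trans (key b).symm
  · intro a c hc
    by_cases hl : Fin.last n ∈ c.support
    · exact (no_cycle_through (fun w h => ext1_adj_last h) hc hl).elim
    · have hsub : ∀ e ∈ c.edges, e ∈ (S.map Fin.castSuccEmb).edgeSet := by
        intro e he
        have heT := Walk.edges_subset_edgeSet c he
        rw [ext1, edgeSet_sup] at heT
        rcases heT with h | h
        · exact h
        · exfalso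
          rw [edge, edgeSet_fromEdgeSet] at h
          obtain ⟨he1, -⟩ := h
          rw [Set.mem_singleton_iff] at he1
          subst he1
          exact hl (Walk.fst_mem_support_of_mem_edges c he)
      exact isAcyclic_map hS.IsAcyclic (c.transfer _ hsub) (hc.transfer hsub)

/-- deleting a pendant last vertex preserves treeness -/
lemma res_isTree_unique {T : SimpleGraph (Fin (n+1))} {u : Fin n} (hT : T.IsTree)
    (hu : ∀ w, T.Adj (Fin.last n) w → w = u.castSucc) (hn : 0 < n) : (res T).IsTree := by
  constructor
  · refine connected_of hT.isConnected (fun i j h => h) ?_ hn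
    intro w1 w2 h1 h2
    have e1 : w1.castSucc = u.castSucc := hu _ h1.symm
    have e2 : w2.castSucc = u.castSucc := hu _ h2
    obtain rfl : w1 = w2 := Fin.castSucc_injective n (e1.trans e2.symm)
    exact Reachable.refl _
  · intro a c hc
    have hinj : Function.Injective
        (show (res T) →g T from ⟨Fin.castSucc, fun h => h⟩) :=
      fun i j hij => Fin.castSucc_injective n hij
    exact hT.IsAcyclic _ (hc.map hinj)

lemma not_adj_of_both {T : SimpleGraph (Fin (n+1))} {x1 x2 : Fin n} (hT : T.IsTree)
    (hne : x1 ≠ x2)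
    (h1 : T.Adj (Fin.last n) x1.castSucc) (h2 : T.Adj (Fin.last n) x2.castSucc) :
    ¬ T.Adj x1.castSucc x2.castSucc := by
  intro had
  have hb := isAcyclic_iff_forall_adj_isBridge.mp hT.IsAcyclic h1
  rw [isBridge_iff] at hb
  refine hb ?_
  have a1 : (T \ fromEdgeSet {s(Fin.last n, x1.castSucc)}).Adj (Fin.last n) x2.castSucc := by
    refine ⟨h2, ?_⟩
    rw [fromEdgeSet_adj, Set.mem_singleton_iff, Sym2.eq_iff]
    rintro ⟨(⟨-, h⟩ | ⟨h, -⟩), -⟩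
    · exact hne (Fin.castSucc_injective n h).symm
    · exact cs_ne_last' x1 h.symm
  have a2 : (T \ fromEdgeSet {s(Fin.last n, x1.castSucc)}).Adj x2.castSucc x1.castSucc := by
    refine ⟨had.symm, ?_⟩
    rw [fromEdgeSet_adj, Set.mem_singleton_iff, Sym2.eq_iff]
    rintro ⟨(⟨h, -⟩ | ⟨-, h⟩), -⟩
    · exact cs_ne_last' x2 h
    · exact cs_ne_last' x1 h
  exact a1.reachable.trans a2.reachable

/-- hom given adjacency implication -/
def csHomSub (A : SimpleGraph (Fin n)) (B : SimpleGraph (Fin (n+1)))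
    (h : ∀ i j : Fin n, A.Adj i j → B.Adj i.castSucc j.castSucc) : A →g B :=
  ⟨Fin.castSucc, fun hab => h _ _ hab⟩

/-- contracting the two edges at a degree-2 last vertex preserves treeness -/
lemma contract_isTree {T : SimpleGraph (Fin (n+1))} {x1 x2 : Fin n} (hT : T.IsTree)
    (hne : x1 ≠ x2)
    (h1 : T.Adj (Fin.last n) x1.castSucc) (h2 : T.Adj (Fin.last n) x2.castSucc)
    (hnb : ∀ w, T.Adj (Fin.last n) w → w = x1.castSucc ∨ w = x2.castSucc)
    (hn : 0 < n) : (res T ⊔ edge x1 x2).IsTree := by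
  have hnadj := not_adj_of_both hT hne h1 h2
  constructor
  · refine connected_of hT.isConnected (fun i j h => Or.inl h) ?_ hn
    intro w1 w2 hw1 hw2
    have e1 := hnb _ hw1.symm
    have e2 := hnb _ hw2
    by_cases heq : w1 = w2
    · subst heq; exact Reachable.refl _
    · refine (Adj.reachable ?_)
      refine Or.inr ?_
      rw [edge_adj]
      have hww : w1 ≠ w2 := heq
      rcases e1 with e1 | e1 <;> rcases e2 with e2 | e2 <;>
        first
          | exact absurd (Fin.castSucc_injective n (e1.trans e2.symm)) hww
          | exact ⟨Or.inl ⟨Fin.castSucc_injective n e1, Fin.castSucc_injective n e2⟩, hww⟩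
          | exact ⟨Or.inr ⟨Fin.castSucc_injective n e1, Fin.castSucc_injective n e2⟩, hww⟩
  · intro a c hc
    by_cases hmem : s(x1, x2) ∈ c.edges
    · -- the edge x1x2 would be a bridge, contradiction
      exfalso
      have hbridge : (res T ⊔ edge x1 x2).IsBridge s(x1, x2) := by
        rw [isBridge_iff]
        · intro hreach
          have hb := isAcyclic_iff_forall_adj_isBridge.mp hT.IsAcyclic h1
          rw [isBridge_iff] at hb
          refine hb ?_
          have hadjhom : ∀ a b : Fin n,
              ((res T ⊔ edge x1 x2) \ fromEdgeSet {s(x1, x2)}).Adj a b →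
              (T \ fromEdgeSet {s(Fin.last n, x1.castSucc)}).Adj a.castSucc b.castSucc := by
            intro a b hab
            obtain ⟨hab1, hab2⟩ := hab
            have hTab : T.Adj a.castSucc b.castSucc := by
              rcases hab1 with h | h
              · exact h
              · exfalso
                rw [edge_adj] at h
                refine hab2 ?_
                rw [fromEdgeSet_adj, Set.mem_singleton_iff, Sym2.eq_iff]
                exact ⟨h.1, h.2⟩
            refine ⟨hTab, ?_⟩
            rw [fromEdgeSet_adj, Set.mem_singleton_iff, Sym2.eq_iff]
            rintro ⟨(⟨h, -⟩ | ⟨-, h⟩), -⟩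
            · exact cs_ne_last' a h
            · exact cs_ne_last' b h
          have hr2 : (T \ fromEdgeSet {s(Fin.last n, x1.castSucc)}).Reachable
              x1.castSucc x2.castSucc := hreach.map (csHomSub _ _ hadjhom)
          have a1 : (T \ fromEdgeSet {s(Fin.last n, x1.castSucc)}).Adj (Fin.last n)
              x2.castSucc := by
            refine ⟨h2, ?_⟩
            rw [fromEdgeSet_adj, Set.mem_singleton_iff, Sym2.eq_iff]
            rintro ⟨(⟨-, h⟩ | ⟨h, -⟩), -⟩
            · exact hne (Fin.castSucc_injective n h).symm
            · exact cs_ne_last' x1 h.symm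
          exact a1.reachable.trans hr2.symm
      rw [isBridge_iff_adj_and_forall_cycle_notMem (show (res T ⊔ edge x1 x2).Adj x1 x2 from
        Or.inr (by rw [edge_adj]; exact ⟨Or.inl ⟨rfl, rfl⟩, hne⟩))] at hbridge
      exact hbridge c hc hmem
    · have hsub : ∀ e ∈ c.edges, e ∈ (res T).edgeSet := by
        intro e he
        have heT := Walk.edges_subset_edgeSet c he
        rw [edgeSet_sup] at heT
        rcases heT with h | h
        · exact h
        · exfalso
          rw [edge, edgeSet_fromEdgeSet] at h
          obtain ⟨he1, -⟩ := h
          rw [Set.mem_singleton_iff] at he1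
          rw [he1] at he
          exact hmem he
      have hinj : Function.Injective
          (show (res T) →g T from ⟨Fin.castSucc, fun h => h⟩) :=
        fun i j hij => Fin.castSucc_injective n hij
      exact hT.IsAcyclic _ (((hc.transfer hsub)).map hinj)

lemma eq_of_res_eq {T T' : SimpleGraph (Fin (n+1))} (h : res T = res T')
    (hl : ∀ w, T.Adj (Fin.last n) w ↔ T'.Adj (Fin.last n) w) : T = T' := by
  ext a b
  by_cases ha : a = Fin.last n
  · subst ha; exact hl b
  · by_cases hb : b = Fin.last n
    · subst hb
      rw [adj_comm, adj_comm T']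
      exact hl a
    · obtain ⟨a', rfl⟩ := Fin.exists_castSucc_eq.mpr ha
      obtain ⟨b', rfl⟩ := Fin.exists_castSucc_eq.mpr hb
      constructor
      · intro hadj
        have : (res T).Adj a' b' := hadj
        rw [h] at this
        exact this
      · intro hadj
        have : (res T').Adj a' b' := hadj
        rw [← h] at this
        exact this


lemma ladder_adj_iff {m : ℕ} {a b : Fin m} : (ladder m).Adj a b ↔ a ≠ b ∧
    ((b : ℕ) = (a : ℕ) + 1 ∨ (b : ℕ) = (a : ℕ) + 2 ∨
     (a : ℕ) = (b : ℕ) + 1 ∨ (a : ℕ) = (b : ℕ) + 2) := by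
  simp only [ladder, fromRel_adj]
  tauto

lemma ladder_adj_last1 (hn : 2 ≤ n) :
    (ladder (n+1)).Adj (Fin.last n) (⟨n-1, by omega⟩ : Fin n).castSucc := by
  rw [ladder_adj_iff]
  refine ⟨(cs_ne_last' _).symm, ?_⟩
  simp only [Fin.coe_castSucc, Fin.val_last]
  omega

lemma ladder_adj_last2 (hn : 2 ≤ n) :
    (ladder (n+1)).Adj (Fin.last n) (⟨n-2, by omega⟩ : Fin n).castSucc := by
  rw [ladder_adj_iff]
  refine ⟨(cs_ne_last' _).symm, ?_⟩
  simp only [Fin.coe_castSucc, Fin.val_last]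
  omega

lemma last_nbr (hn : 2 ≤ n) {T : SimpleGraph (Fin (n+1))} (hle : T ≤ ladder (n+1))
    {w : Fin (n+1)} (h : T.Adj (Fin.last n) w) :
    w = (⟨n-1, by omega⟩ : Fin n).castSucc ∨ w = (⟨n-2, by omega⟩ : Fin n).castSucc := by
  have hl := hle h
  rw [ladder_adj_iff] at hl
  have hwlt : (w : ℕ) < n + 1 := w.isLt
  simp only [Fin.val_last] at hl
  rcases hl.2 with h1 | h1 | h1 | h1
  · omega
  · omega
  · left
    apply Fin.ext
    simp only [Fin.coe_castSucc]
    omega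
  · right
    apply Fin.ext
    simp only [Fin.coe_castSucc]
    omega

lemma map_le_ladder {S : SimpleGraph (Fin n)} (hS : S ≤ ladder n) :
    S.map Fin.castSuccEmb ≤ ladder (n+1) := by
  intro a b h
  obtain ⟨i, j, hij, rfl, rfl⟩ := (SimpleGraph.map_adj _ _ _ _).mp h
  have := hS hij
  rw [ladder_adj_iff] at this ⊢
  refine ⟨fun hc => this.1 (Fin.castSucc_injective n hc), ?_⟩
  simpa using this.2

lemma res_le_ladder {T : SimpleGraph (Fin (n+1))} (hT : T ≤ ladder (n+1)) :
    res T ≤ ladder n := by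
  intro i j h
  have := hT h
  rw [ladder_adj_iff] at this ⊢
  refine ⟨fun hc => this.1 (by rw [hc]), ?_⟩
  simpa using this.2

lemma edge_le_ladder (hn : 2 ≤ n) :
    edge (⟨n-1, by omega⟩ : Fin n) (⟨n-2, by omega⟩ : Fin n) ≤ ladder n := by
  intro a b h
  rw [edge_adj] at h
  rw [ladder_adj_iff]
  refine ⟨h.2, ?_⟩
  rcases h.1 with ⟨rfl, rfl⟩ | ⟨rfl, rfl⟩ <;> simp <;> omega

lemma edge_last_le_ladder {u : Fin n} (hu : (ladder (n+1)).Adj (Fin.last n) u.castSucc) :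
    edge (Fin.last n) u.castSucc ≤ ladder (n+1) := by
  intro a b h
  rw [edge_adj] at h
  rcases h.1 with ⟨rfl, rfl⟩ | ⟨rfl, rfl⟩
  · exact hu
  · exact hu.symm

lemma ext1_le_ladder {S : SimpleGraph (Fin n)} {u : Fin n} (hS : S ≤ ladder n)
    (hu : (ladder (n+1)).Adj (Fin.last n) u.castSucc) : ext1 S u ≤ ladder (n+1) :=
  sup_le (map_le_ladder hS) (edge_last_le_ladder hu)

lemma exists_nbr (hn : 0 < n) {T : SimpleGraph (Fin (n+1))} (hT : T.Connected) :
    ∃ w, T.Adj (Fin.last n) w := by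
  obtain ⟨p⟩ := hT.preconnected (Fin.last n) (⟨0, hn⟩ : Fin n).castSucc
  have hp : ¬ p.Nil := SimpleGraph.Walk.not_nil_of_ne (cs_ne_last' _).symm
  obtain ⟨w, h, -, -⟩ := SimpleGraph.Walk.not_nil_iff.mp hp
  exact ⟨w, h⟩

end LadderAux

/-- If the ladder `L'` on `n+1` vertices is obtained from the ladder `L`
on `n ≥ 2` vertices by appending one vertex adjacent to exactly two (mutually adjacent)
vertices of `L`, then `2·τ(L) ≤ τ(L') ≤ 3·τ(L)`. -/
theorem ladder_extension_spanning_trees (n : ℕ) (hn : 2 ≤ n) :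
    2 * numSpanningTrees (ladder n) ≤ numSpanningTrees (ladder (n + 1)) ∧
    numSpanningTrees (ladder (n + 1)) ≤ 3 * numSpanningTrees (ladder n) := by
  classical
  have h0 : 0 < n := by omega
  set x1 : Fin n := ⟨n-1, by omega⟩ with hx1
  set x2 : Fin n := ⟨n-2, by omega⟩ with hx2
  have hne : x1 ≠ x2 := by
    simp only [hx1, hx2, Ne, Fin.mk.injEq]
    omega
  set TL : Set (SimpleGraph (Fin n)) := {T | T ≤ ladder n ∧ T.IsTree} with hTLdef
  set TL' : Set (SimpleGraph (Fin (n+1))) := {T | T ≤ ladder (n+1) ∧ T.IsTree} with hTL'def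
  have hNum : numSpanningTrees (ladder n) = TL.ncard := rfl
  have hNum' : numSpanningTrees (ladder (n+1)) = TL'.ncard := rfl
  have hadj1 : (ladder (n+1)).Adj (Fin.last n) x1.castSucc := LadderAux.ladder_adj_last1 hn
  have hadj2 : (ladder (n+1)).Adj (Fin.last n) x2.castSucc := LadderAux.ladder_adj_last2 hn
  have hnbr : ∀ T : SimpleGraph (Fin (n+1)), T ≤ ladder (n+1) → ∀ w,
      T.Adj (Fin.last n) w → w = x1.castSucc ∨ w = x2.castSucc :=
    fun T hle w h => LadderAux.last_nbr hn hle h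
  rw [hNum, hNum']
  constructor
  · -- lower bound
    have himg : ∀ u : Fin n, (ladder (n+1)).Adj (Fin.last n) u.castSucc →
        (fun S => LadderAux.ext1 S u) '' TL ⊆ TL' := by
      rintro u hu _ ⟨S, hS, rfl⟩
      exact ⟨LadderAux.ext1_le_ladder hS.1 hu, LadderAux.ext1_isTree hS.2⟩
    have hinj : ∀ u : Fin n, Set.InjOn (fun S => LadderAux.ext1 S u) TL := by
      intro u S _ S' _ h
      have h2 := congrArg LadderAux.res h
      rwa [LadderAux.res_ext1, LadderAux.res_ext1] at h2
    have hdisj : Disjoint ((fun S => LadderAux.ext1 S x1) '' TL)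
        ((fun S => LadderAux.ext1 S x2) '' TL) := by
      rw [Set.disjoint_left]
      rintro _ ⟨S, -, rfl⟩ ⟨S', -, hEq⟩
      have hEq' : LadderAux.ext1 S' x2 = LadderAux.ext1 S x1 := hEq
      have h1 : (LadderAux.ext1 S' x2).Adj (Fin.last n) x1.castSucc := by
        rw [hEq']; exact LadderAux.ext1_adj_last' x1
      have := LadderAux.ext1_adj_last h1
      exact hne (Fin.castSucc_injective n this)
    calc 2 * TL.ncard = TL.ncard + TL.ncard := two_mul _
      _ = ((fun S => LadderAux.ext1 S x1) '' TL).ncard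
          + ((fun S => LadderAux.ext1 S x2) '' TL).ncard := by
          rw [Set.ncard_image_of_injOn (hinj x1), Set.ncard_image_of_injOn (hinj x2)]
      _ = (((fun S => LadderAux.ext1 S x1) '' TL)
          ∪ ((fun S => LadderAux.ext1 S x2) '' TL)).ncard :=
          (Set.ncard_union_eq hdisj (Set.toFinite _) (Set.toFinite _)).symm
      _ ≤ TL'.ncard :=
          Set.ncard_le_ncard (Set.union_subset (himg x1 hadj1) (himg x2 hadj2))
            (Set.toFinite _)
  · -- upper bound
    set A1 : Set (SimpleGraph (Fin (n+1))) :=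
      {T | T ∈ TL' ∧ T.Adj (Fin.last n) x1.castSucc ∧ ¬ T.Adj (Fin.last n) x2.castSucc}
      with hA1def
    set A2 : Set (SimpleGraph (Fin (n+1))) :=
      {T | T ∈ TL' ∧ T.Adj (Fin.last n) x2.castSucc ∧ ¬ T.Adj (Fin.last n) x1.castSucc}
      with hA2def
    set A3 : Set (SimpleGraph (Fin (n+1))) :=
      {T | T ∈ TL' ∧ T.Adj (Fin.last n) x1.castSucc ∧ T.Adj (Fin.last n) x2.castSucc}
      with hA3def
    have hcover : TL' ⊆ (A1 ∪ A2) ∪ A3 := by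
      intro T hT
      obtain ⟨w, hw⟩ := LadderAux.exists_nbr h0 hT.2.isConnected
      have hw' := hnbr T hT.1 w hw
      by_cases c1 : T.Adj (Fin.last n) x1.castSucc
        <;> by_cases c2 : T.Adj (Fin.last n) x2.castSucc
      · exact Or.inr ⟨hT, c1, c2⟩
      · exact Or.inl (Or.inl ⟨hT, c1, c2⟩)
      · exact Or.inl (Or.inr ⟨hT, c2, c1⟩)
      · exfalso
        rcases hw' with rfl | rfl
        · exact c1 hw
        · exact c2 hw
    have hd12 : Disjoint A1 A2 := by
      rw [Set.disjoint_left]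
      rintro T ⟨-, hA, -⟩ ⟨-, -, hB⟩
      exact hB hA
    have hd3 : Disjoint (A1 ∪ A2) A3 := by
      rw [Set.disjoint_left]
      rintro T (⟨-, -, hA⟩ | ⟨-, -, hA⟩) ⟨-, hB1, hB2⟩
      · exact hA hB2
      · exact hA hB1
    -- A1 bound
    have hiff1 : ∀ T ∈ A1, ∀ w, (T.Adj (Fin.last n) w ↔ w = x1.castSucc) := by
      rintro T ⟨hTL'mem, hA, hB⟩ w
      constructor
      · intro h
        rcases hnbr T hTL'mem.1 w h with rfl | rfl
        · rfl
        · exact absurd h hB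
      · rintro rfl; exact hA
    have hb1 : A1.ncard ≤ TL.ncard := by
      have hinj1 : Set.InjOn LadderAux.res A1 := by
        intro T hT T' hT' h
        exact LadderAux.eq_of_res_eq h
          (fun w => (hiff1 T hT w).trans (hiff1 T' hT' w).symm)
      have himg1 : LadderAux.res '' A1 ⊆ TL := by
        rintro _ ⟨T, hT, rfl⟩
        refine ⟨LadderAux.res_le_ladder hT.1.1, ?_⟩
        exact LadderAux.res_isTree_unique hT.1.2 (fun w h => (hiff1 T hT w).mp h) h0
      calc A1.ncard = (LadderAux.res '' A1).ncard :=
            (Set.ncard_image_of_injOn hinj1).symm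
        _ ≤ TL.ncard := Set.ncard_le_ncard himg1 (Set.toFinite _)
    -- A2 bound
    have hiff2 : ∀ T ∈ A2, ∀ w, (T.Adj (Fin.last n) w ↔ w = x2.castSucc) := by
      rintro T ⟨hTL'mem, hA, hB⟩ w
      constructor
      · intro h
        rcases hnbr T hTL'mem.1 w h with rfl | rfl
        · exact absurd h hB
        · rfl
      · rintro rfl; exact hA
    have hb2 : A2.ncard ≤ TL.ncard := by
      have hinj2 : Set.InjOn LadderAux.res A2 := by
        intro T hT T' hT' h
        exact LadderAux.eq_of_res_eq h
          (fun w => (hiff2 T hT w).trans (hiff2 T' hT' w).symm)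
      have himg2 : LadderAux.res '' A2 ⊆ TL := by
        rintro _ ⟨T, hT, rfl⟩
        refine ⟨LadderAux.res_le_ladder hT.1.1, ?_⟩
        exact LadderAux.res_isTree_unique hT.1.2 (fun w h => (hiff2 T hT w).mp h) h0
      calc A2.ncard = (LadderAux.res '' A2).ncard :=
            (Set.ncard_image_of_injOn hinj2).symm
        _ ≤ TL.ncard := Set.ncard_le_ncard himg2 (Set.toFinite _)
    -- A3 bound
    have hiff3 : ∀ T ∈ A3, ∀ w,
        (T.Adj (Fin.last n) w ↔ (w = x1.castSucc ∨ w = x2.castSucc)) := by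
      rintro T ⟨hTL'mem, hA, hB⟩ w
      constructor
      · exact hnbr T hTL'mem.1 w
      · rintro (rfl | rfl)
        · exact hA
        · exact hB
    have hb3 : A3.ncard ≤ TL.ncard := by
      have hinj3 : Set.InjOn (fun T => LadderAux.res T ⊔ edge x1 x2) A3 := by
        intro T hT T' hT' h
        have hnadjT := LadderAux.not_adj_of_both hT.1.2 hne hT.2.1 hT.2.2
        have hnadjT' := LadderAux.not_adj_of_both hT'.1.2 hne hT'.2.1 hT'.2.2
        have haux : ∀ (U U' : SimpleGraph (Fin (n+1))),
            ¬ U.Adj x1.castSucc x2.castSucc →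
            LadderAux.res U ⊔ edge x1 x2 = LadderAux.res U' ⊔ edge x1 x2 →
            ∀ i j : Fin n, (LadderAux.res U).Adj i j → (LadderAux.res U').Adj i j := by
          intro U U' hnadj hEq i j hadj
          have h2 : (LadderAux.res U ⊔ edge x1 x2).Adj i j := Or.inl hadj
          rw [hEq] at h2
          rcases h2 with h2 | h2
          · exact h2
          · exfalso
            rw [edge_adj] at h2
            rcases h2.1 with ⟨rfl, rfl⟩ | ⟨rfl, rfl⟩
            · exact hnadj hadj
            · exact hnadj hadj.symm
        have hres : LadderAux.res T = LadderAux.res T' := by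
          ext i j
          exact ⟨haux T T' hnadjT h i j, haux T' T hnadjT' h.symm i j⟩
        exact LadderAux.eq_of_res_eq hres
          (fun w => (hiff3 T hT w).trans (hiff3 T' hT' w).symm)
      have himg3 : (fun T => LadderAux.res T ⊔ edge x1 x2) '' A3 ⊆ TL := by
        rintro _ ⟨T, hT, rfl⟩
        refine ⟨sup_le (LadderAux.res_le_ladder hT.1.1) (LadderAux.edge_le_ladder hn), ?_⟩
        exact LadderAux.contract_isTree hT.1.2 hne hT.2.1 hT.2.2 (hnbr T hT.1.1) h0
      calc A3.ncard = ((fun T => LadderAux.res T ⊔ edge x1 x2) '' A3).ncard :=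
            (Set.ncard_image_of_injOn hinj3).symm
        _ ≤ TL.ncard := Set.ncard_le_ncard himg3 (Set.toFinite _)
    have hsplit : ((A1 ∪ A2) ∪ A3).ncard = A1.ncard + A2.ncard + A3.ncard := by
      rw [Set.ncard_union_eq hd3 (Set.toFinite _) (Set.toFinite _),
        Set.ncard_union_eq hd12 (Set.toFinite _) (Set.toFinite _)]
    have hfin : TL'.ncard ≤ ((A1 ∪ A2) ∪ A3).ncard :=
      Set.ncard_le_ncard hcover (Set.toFinite _)
    omega
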